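/- Let f : ℂ → ℂ be continuous on the closed unit disc and analytic on the open unit disc, with Taylor expansion f(z) = ∑_{k=0}^∞ f_k zᵏ on the open disc. Then (1/2π) ∫₀^{2π} conj(f(e^{iθ})) · (I − e^{iθ}A)⁻¹ B dθ = (∑_{k=0}^∞ conj(f_k) Aᵏ) B, where the matrix series on the right converges. -/

import Mathlib

open Matrix Filter MeasureTheory
open scoped NNReal ENNReal Real Topology

attribute [local instance] Matrix.linftyOpNormedAddCommGroup Matrix.linftyOpNormedRing
  Matrix.linftyOpNormedAlgebra Matrix.linftyOpNormedSpace

private lemma conj_intervalIntegral (f : ℝ → ℂ) (a b : ℝ) :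
    ∫ x in a..b, (starRingEnd ℂ) (f x) = (starRingEnd ℂ) (∫ x in a..b, f x) := by
  simp only [intervalIntegral, integral_conj, map_sub]

private lemma entry_norm_le {m p : Type*} [Fintype m] [Fintype p] (M : Matrix m p ℂ)
    (i : m) (j : p) : ‖M i j‖ ≤ ‖M‖ := by
  have h1 : ‖M i j‖₊ ≤ ‖M‖₊ := by
    rw [Matrix.linfty_opNNNorm_def]
    exact le_trans
      (Finset.single_le_sum (f := fun j' => ‖M i j'‖₊) (fun _ _ => zero_le) (Finset.mem_univ j))
      (Finset.le_sup (f := fun i => ∑ j, ‖M i j‖₊) (Finset.mem_univ i))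
  rw [← coe_nnnorm, ← coe_nnnorm]
  exact_mod_cast h1

private lemma pow_bound {n : ℕ} (hn : 1 ≤ n) (A : Matrix (Fin n) (Fin n) ℂ)
    (hA : ∀ μ ∈ spectrum ℂ A, ‖μ‖ < 1) :
    ∃ t : ℝ, 0 ≤ t ∧ t < 1 ∧ ∀ᶠ k : ℕ in atTop, ‖A ^ k‖ ≤ t ^ k := by
  haveI : Nonempty (Fin n) := Fin.pos_iff_nonempty.mp hn
  have hρ : spectralRadius ℂ A < (1 : ℝ≥0) := by
    apply spectrum.spectralRadius_lt_of_forall_lt A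
    intro z hz
    have := hA z hz
    rw [← coe_nnnorm] at this
    exact_mod_cast this
  obtain ⟨s, hs1, hs2⟩ := ENNReal.lt_iff_exists_nnreal_btwn.mp hρ
  refine ⟨s, s.coe_nonneg, by exact_mod_cast hs2, ?_⟩
  have hg := spectrum.pow_nnnorm_pow_one_div_tendsto_nhds_spectralRadius A
  filter_upwards [hg.eventually_lt_const hs1, Filter.eventually_ge_atTop 1] with k hk hk1
  have hkr : (k : ℝ) ≠ 0 := Nat.cast_ne_zero.mpr (by omega)
  have h2 : ((‖A ^ k‖₊ : ℝ≥0∞) ^ (1 / (k:ℝ))) ^ (k:ℝ) ≤ ((s : ℝ≥0∞)) ^ (k:ℝ) :=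
    ENNReal.rpow_le_rpow hk.le (by positivity)
  rw [← ENNReal.rpow_mul, one_div, inv_mul_cancel₀ hkr, ENNReal.rpow_one,
    ENNReal.rpow_natCast] at h2
  have h3 : ‖A ^ k‖₊ ≤ s ^ k := by exact_mod_cast h2
  rw [← coe_nnnorm]
  calc (‖A ^ k‖₊ : ℝ) ≤ ((s ^ k : ℝ≥0) : ℝ) := by exact_mod_cast h3
  _ = (s : ℝ) ^ k := by push_cast; ring

/-- For `f` continuous on the closed unit disc and analytic on the open unit
disc with Taylor expansion `f(z) = ∑ f_k zᵏ` there, one has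
`(1/2π) ∫₀^{2π} conj(f(e^{iθ})) (I − e^{iθ}A)⁻¹ B dθ = (∑ conj(f_k) Aᵏ) B`,
the matrix series on the right being convergent. -/
theorem inner_product_with_G_eval
    {n : ℕ} (hn : 1 ≤ n)
    (A : Matrix (Fin n) (Fin n) ℂ) (B : Matrix (Fin n) (Fin 1) ℂ)
    (hA : ∀ μ ∈ spectrum ℂ A, ‖μ‖ < 1)
    (f : ℂ → ℂ) (c : ℕ → ℂ)
    (hf_cont : ContinuousOn f (Metric.closedBall (0:ℂ) 1))
    (hf_anal : AnalyticOn ℂ f (Metric.ball (0:ℂ) 1))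
    (hf_taylor : ∀ z ∈ Metric.ball (0:ℂ) 1, HasSum (fun k : ℕ => c k * z ^ k) (f z)) :
    Summable (fun k : ℕ => (starRingEnd ℂ) (c k) • A ^ k) ∧
      (Matrix.of fun i j =>
        (1 / (2 * Real.pi) : ℂ) * ∫ θ in (0:ℝ)..(2 * Real.pi),
          (starRingEnd ℂ) (f (Complex.exp (θ * Complex.I))) *
            (((1 - Complex.exp (θ * Complex.I) • A)⁻¹ * B :
              Matrix (Fin n) (Fin 1) ℂ) i j)) =
      (∑' k : ℕ, (starRingEnd ℂ) (c k) • A ^ k) * B := by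
  haveI : Nonempty (Fin n) := Fin.pos_iff_nonempty.mp hn
  obtain ⟨t, ht0, ht1, htb⟩ := pow_bound hn A hA
  -- bound on Taylor coefficients
  have hcb : ∀ r : ℝ, 0 ≤ r → r < 1 → ∃ M : ℝ, ∀ k, ‖c k‖ * r ^ k ≤ M := by
    intro r hr0 hr1
    have hmem : ((r : ℂ)) ∈ Metric.ball (0:ℂ) 1 := by
      rw [Metric.mem_ball, dist_zero_right, Complex.norm_real, Real.norm_eq_abs,
        abs_of_nonneg hr0]
      exact hr1
    obtain ⟨M, hM⟩ :=
      (((hf_taylor _ hmem).summable.tendsto_atTop_zero).norm).bddAbove_range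
    refine ⟨M, fun k => ?_⟩
    have h := hM (Set.mem_range_self (f := fun k => ‖c k * (r:ℂ) ^ k‖) k)
    rw [norm_mul, norm_pow, Complex.norm_real, Real.norm_eq_abs, abs_of_nonneg hr0] at h
    exact h
  obtain ⟨r, htr, hr1, hr0⟩ : ∃ r : ℝ, t < r ∧ r < 1 ∧ 0 < r :=
    ⟨(1 + t) / 2, by linarith, by linarith, by linarith⟩
  obtain ⟨M, hM⟩ := hcb r hr0.le hr1
  have hM0 : 0 ≤ M := le_trans (by positivity) (hM 0)
  -- summability of the matrix series
  have hsum1 : Summable (fun k : ℕ => (starRingEnd ℂ) (c k) • A ^ k) := by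
    apply Summable.of_norm_bounded_eventually_nat (g := fun k => M * (t / r) ^ k)
      ((summable_geometric_of_lt_one (by positivity)
        (by rw [div_lt_one hr0]; exact htr)).mul_left M)
    filter_upwards [htb] with k hk
    rw [norm_smul, RCLike.norm_conj]
    calc ‖c k‖ * ‖A ^ k‖ ≤ (M / r ^ k) * t ^ k := by
          apply mul_le_mul ?_ hk (norm_nonneg _) (by positivity)
          rw [le_div_iff₀ (by positivity)]
          exact hM k
    _ = M * (t / r) ^ k := by rw [div_pow]; ring
  refine ⟨hsum1, ?_⟩
  -- Neumann series
  have hNeu : ∀ z : ℂ, ‖z‖ = 1 →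
      HasSum (fun k : ℕ => z ^ k • A ^ k) ((1 - z • A)⁻¹) := by
    intro z hz
    have hnorm : ∀ k : ℕ, ‖z ^ k • A ^ k‖ = ‖A ^ k‖ := fun k => by
      rw [norm_smul, norm_pow, hz, one_pow, one_mul]
    have hsume : Summable (fun k : ℕ => z ^ k • A ^ k) := by
      apply Summable.of_norm_bounded_eventually_nat (g := fun k => t ^ k)
        (summable_geometric_of_lt_one ht0 ht1)
      filter_upwards [htb] with k hk
      rw [hnorm]; exact hk
    have h0 : Tendsto (fun k : ℕ => z ^ k • A ^ k) atTop (𝓝 0) := by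
      apply squeeze_zero_norm' ?_ (tendsto_pow_atTop_nhds_zero_of_lt_one ht0 ht1)
      filter_upwards [htb] with k hk
      rw [hnorm]; exact hk
    have hS := hsume.hasSum
    set S := ∑' k : ℕ, z ^ k • A ^ k with hSdef
    have key : (1 - z • A) * S = 1 := by
      have h2 : HasSum (fun k : ℕ => (1 - z • A) * (z ^ k • A ^ k)) ((1 - z • A) * S) :=
        hS.mul_left _
      have h3 : (fun k : ℕ => (1 - z • A) * (z ^ k • A ^ k))
          = fun k => z ^ k • A ^ k - z ^ (k+1) • A ^ (k+1) := by
        funext k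
        rw [sub_mul, one_mul, smul_mul_assoc, mul_smul_comm, smul_smul, ← pow_succ',
          ← pow_succ']
      rw [h3] at h2
      have h4 := h2.tendsto_sum_nat
      have h5 : (fun N : ℕ => ∑ k ∈ Finset.range N,
          (z ^ k • A ^ k - z ^ (k+1) • A ^ (k+1)))
          = fun N => z ^ 0 • A ^ 0 - z ^ N • A ^ N := by
        funext N
        exact Finset.sum_range_sub' (fun k => z ^ k • A ^ k) N
      rw [h5] at h4
      have h6 : Tendsto (fun N : ℕ => z ^ 0 • A ^ 0 - z ^ N • A ^ N) atTop
          (𝓝 (z ^ 0 • A ^ 0 - 0)) := tendsto_const_nhds.sub h0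
      have h7 := tendsto_nhds_unique h4 h6
      rw [h7]
      simp
    rw [Matrix.inv_eq_right_inv key]
    exact hS
  -- entry extraction map
  have hphi : ∀ (i : Fin n) (j : Fin 1) (g : ℕ → Matrix (Fin n) (Fin n) ℂ)
      (S : Matrix (Fin n) (Fin n) ℂ), HasSum g S →
      HasSum (fun k => (g k * B) i j) ((S * B) i j) := by
    intro i j g S hg
    let φ : Matrix (Fin n) (Fin n) ℂ →ₗ[ℂ] ℂ :=
      { toFun := fun M => (M * B) i j
        map_add' := fun M N => by simp [Matrix.add_mul]
        map_smul' := fun a M => by simp [Matrix.smul_mul] }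
    exact hg.map φ.toAddMonoidHom (LinearMap.continuous_of_finiteDimensional φ)
  -- power series coefficients via Cauchy integral
  let q : FormalMultilinearSeries ℂ ℂ ℂ :=
    fun k => ContinuousMultilinearMap.mkPiRing ℂ (Fin k) (c k)
  have hqrad : 1 ≤ q.radius := by
    apply ENNReal.le_of_forall_nnreal_lt
    intro s hs
    have hs1 : (s : ℝ) < 1 := by exact_mod_cast hs
    apply q.le_radius_of_isBigO
    have hmem : (((s:ℝ) : ℂ)) ∈ Metric.ball (0:ℂ) 1 := by
      rw [Metric.mem_ball, dist_zero_right, Complex.norm_real, Real.norm_eq_abs,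
        abs_of_nonneg s.coe_nonneg]
      exact hs1
    have h0 := (((hf_taylor _ hmem).summable.tendsto_atTop_zero).norm)
    have heq : (fun k : ℕ => ‖q k‖ * (s:ℝ) ^ k) = fun k => ‖c k * ((s:ℝ):ℂ) ^ k‖ := by
      funext k
      rw [ContinuousMultilinearMap.norm_mkPiRing, norm_mul, norm_pow, Complex.norm_real,
        Real.norm_eq_abs, abs_of_nonneg s.coe_nonneg]
    rw [heq]
    exact h0.isBigO_one ℝ
  have hq : HasFPowerSeriesOnBall f q 0 1 :=
    { r_le := hqrad
      r_pos := one_pos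
      hasSum := by
        intro w hw
        rw [← ENNReal.coe_one, Metric.emetric_ball_nnreal] at hw
        have := hf_taylor w (by simpa using hw)
        simpa [q, ContinuousMultilinearMap.mkPiRing_apply, smul_eq_mul, mul_comm] using this }
  have hball : ContinuousOn f (Metric.closedBall (0:ℂ) ((1:ℝ≥0) : ℝ)) := by
    simpa using hf_cont
  have hdiff : ∀ z ∈ Metric.ball (0:ℂ) ((1:ℝ≥0):ℝ) \ (∅ : Set ℂ), DifferentiableAt ℂ f z := by
    intro z hz
    have h1 : AnalyticOnNhd ℂ f (Metric.ball (0:ℂ) 1) :=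
      (Metric.isOpen_ball.analyticOn_iff_analyticOnNhd).mp hf_anal
    exact (h1 z (by simpa using hz.1)).differentiableAt
  have hp := Complex.hasFPowerSeriesOnBall_of_differentiable_off_countable
      (R := 1) (c := 0) Set.countable_empty hball hdiff one_pos
  have hpq : q = cauchyPowerSeries f 0 1 := by
    have h := (hq.hasFPowerSeriesAt).eq_formalMultilinearSeries (hp.hasFPowerSeriesAt)
    simpa using h
  have hck : ∀ k : ℕ, c k = (2 * (Real.pi:ℂ) * Complex.I)⁻¹ •
      ∮ z in C(0, 1), (1 / (z - 0)) ^ k • (z - 0)⁻¹ • f z := by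
    intro k
    have h1 : q k (fun _ => 1) = c k := by
      simp [q, ContinuousMultilinearMap.mkPiRing_apply]
    rw [← h1, hpq, cauchyPowerSeries_apply]
  have hkey : ∀ k : ℕ,
      (∫ θ in (0:ℝ)..(2*Real.pi), (starRingEnd ℂ) (f (Complex.exp (θ * Complex.I))) *
        (Complex.exp (θ * Complex.I)) ^ k)
      = 2 * Real.pi * (starRingEnd ℂ) (c k) := by
    intro k
    have hπ : ((Real.pi : ℂ)) ≠ 0 := by exact_mod_cast Real.pi_ne_zero
    have h2 : (∮ z in C(0, 1), (1 / (z - 0)) ^ k • (z - 0)⁻¹ • f z)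
        = Complex.I * ∫ θ in (0:ℝ)..(2*Real.pi),
            ((Complex.exp (θ * Complex.I))⁻¹) ^ k * f (Complex.exp (θ * Complex.I)) := by
      rw [circleIntegral, ← intervalIntegral.integral_const_mul]
      apply intervalIntegral.integral_congr
      intro θ hθ
      have hne : Complex.exp (θ * Complex.I) ≠ 0 := Complex.exp_ne_zero _
      simp only [deriv_circleMap, circleMap, Complex.ofReal_one, one_mul, zero_add,
        sub_zero, smul_eq_mul, one_div]
      field_simp
    have h3 : (∫ θ in (0:ℝ)..(2*Real.pi),
        ((Complex.exp (θ * Complex.I))⁻¹) ^ k * f (Complex.exp (θ * Complex.I)))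
        = 2 * Real.pi * c k := by
      have h := hck k
      rw [h2, smul_eq_mul] at h
      rw [h]
      field_simp
      simp only [mul_comm Complex.I]
    have h4 : (starRingEnd ℂ) (∫ θ in (0:ℝ)..(2*Real.pi),
        ((Complex.exp (θ * Complex.I))⁻¹) ^ k * f (Complex.exp (θ * Complex.I)))
        = ∫ θ in (0:ℝ)..(2*Real.pi), (starRingEnd ℂ) (f (Complex.exp (θ * Complex.I))) *
            (Complex.exp (θ * Complex.I)) ^ k := by
      rw [← conj_intervalIntegral]
      apply intervalIntegral.integral_congr
      intro θ hθ
      simp only [_root_.map_mul, map_pow]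
      have hc2 : (starRingEnd ℂ) ((Complex.exp (θ * Complex.I))⁻¹)
          = Complex.exp (θ * Complex.I) := by
        rw [map_inv₀, ← Complex.exp_conj, _root_.map_mul, Complex.conj_I, Complex.conj_ofReal,
          mul_neg, Complex.exp_neg, inv_inv]
      rw [hc2, mul_comm]
    rw [← h4, h3, _root_.map_mul, _root_.map_mul]
    simp [Complex.conj_ofReal, map_ofNat]
  obtain ⟨Mf, hMf⟩ : ∃ Mf, ∀ z ∈ Metric.closedBall (0:ℂ) 1, ‖f z‖ ≤ Mf :=
    (isCompact_closedBall _ _).exists_bound_of_continuousOn hf_cont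
  have hecont : Continuous (fun θ : ℝ => Complex.exp (θ * Complex.I)) :=
    Complex.continuous_exp.comp (Complex.continuous_ofReal.mul continuous_const)
  have henorm : ∀ θ : ℝ, ‖Complex.exp ((θ:ℂ) * Complex.I)‖ = 1 := fun θ => by
    exact Complex.norm_exp_ofReal_mul_I θ
  have hemem : ∀ θ : ℝ, Complex.exp ((θ:ℂ) * Complex.I) ∈ Metric.closedBall (0:ℂ) 1 :=
    fun θ => by rw [Metric.mem_closedBall, dist_zero_right, henorm]
  have hMf0 : 0 ≤ Mf := le_trans (norm_nonneg _) (hMf 0 (by simp))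
  have hfc : Continuous (fun θ : ℝ => f (Complex.exp (θ * Complex.I))) :=
    hf_cont.comp_continuous hecont hemem
  ext i j
  rw [Matrix.of_apply]
  set d : ℕ → ℂ := fun k => (A ^ k * B) i j with hd
  set F : ℕ → ℝ → ℂ := fun k θ =>
    (starRingEnd ℂ) (f (Complex.exp (θ * Complex.I))) * (Complex.exp (θ * Complex.I) ^ k * d k)
    with hF
  have hFint : ∀ k, IntegrableOn (F k) (Set.Ioc 0 (2*Real.pi)) := by
    intro k
    apply Continuous.integrableOn_Ioc
    exact (Complex.continuous_conj.comp hfc).mul ((hecont.pow k).mul continuous_const)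
  have hdk : ∀ k, ‖d k‖ ≤ ‖A ^ k‖ * ‖B‖ := fun k =>
    le_trans (entry_norm_le _ i j) (Matrix.linfty_opNorm_mul _ _)
  have hFnorm : ∀ k θ, ‖F k θ‖ ≤ Mf * ‖d k‖ := by
    intro k θ
    simp only [hF]
    rw [norm_mul, norm_mul, norm_pow, RCLike.norm_conj, henorm, one_pow, one_mul]
    exact mul_le_mul_of_nonneg_right (hMf _ (hemem θ)) (norm_nonneg _)
  have hμ : (volume (Set.Ioc (0:ℝ) (2*Real.pi))).toReal = 2*Real.pi := by
    rw [Real.volume_Ioc, sub_zero, ENNReal.toReal_ofReal (by positivity)]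
  have hFsum : Summable (fun k => ∫ θ in Set.Ioc (0:ℝ) (2*Real.pi), ‖F k θ‖) := by
    apply Summable.of_norm_bounded_eventually_nat (g := fun k => (2*Real.pi * (Mf * ‖B‖)) * t ^ k)
      ((summable_geometric_of_lt_one ht0 ht1).mul_left _)
    filter_upwards [htb] with k hk
    have h1 : (∫ θ in Set.Ioc (0:ℝ) (2*Real.pi), ‖F k θ‖) ≤
        ∫ _ in Set.Ioc (0:ℝ) (2*Real.pi), Mf * ‖d k‖ := by
      apply MeasureTheory.integral_mono ((hFint k).norm) ?_ (fun θ => hFnorm k θ)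
      exact integrableOn_const (by rw [Real.volume_Ioc]; exact ENNReal.ofReal_ne_top)
    rw [MeasureTheory.setIntegral_const, measureReal_def, hμ, smul_eq_mul] at h1
    have h2 : (0:ℝ) ≤ ∫ θ in Set.Ioc (0:ℝ) (2*Real.pi), ‖F k θ‖ :=
      MeasureTheory.integral_nonneg (fun θ => norm_nonneg _)
    rw [Real.norm_eq_abs, abs_of_nonneg h2]
    have h3 : ‖d k‖ ≤ ‖B‖ * t ^ k := by
      calc ‖d k‖ ≤ ‖A ^ k‖ * ‖B‖ := hdk k
      _ ≤ t ^ k * ‖B‖ := mul_le_mul_of_nonneg_right hk (norm_nonneg _)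
      _ = ‖B‖ * t ^ k := by ring
    calc (∫ θ in Set.Ioc (0:ℝ) (2*Real.pi), ‖F k θ‖) ≤ 2*Real.pi * (Mf * ‖d k‖) := h1
    _ ≤ 2*Real.pi * (Mf * (‖B‖ * t ^ k)) := by
        apply mul_le_mul_of_nonneg_left (mul_le_mul_of_nonneg_left h3 hMf0) (by positivity)
    _ = 2*Real.pi * (Mf * ‖B‖) * t ^ k := by ring
  have hswap := MeasureTheory.hasSum_integral_of_summable_integral_norm hFint hFsum
  have hpt : ∀ θ : ℝ, (∑' k, F k θ) = (starRingEnd ℂ) (f (Complex.exp (θ * Complex.I))) *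
      ((1 - Complex.exp (θ * Complex.I) • A)⁻¹ * B) i j := by
    intro θ
    have h1 := hNeu _ (henorm θ)
    have h2 := hphi i j _ _ h1
    have h3 : HasSum (fun k => Complex.exp (θ * Complex.I) ^ k * d k)
        (((1 - Complex.exp (θ * Complex.I) • A)⁻¹ * B) i j) := by
      convert h2 using 2 with k
      simp [hd, Matrix.smul_mul]
    exact (h3.mul_left _).tsum_eq
  have hIoc : (∫ θ in Set.Ioc (0:ℝ) (2*Real.pi), (∑' k, F k θ)) =
      ∫ θ in (0:ℝ)..(2*Real.pi), (starRingEnd ℂ) (f (Complex.exp (θ * Complex.I))) *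
        ((1 - Complex.exp (θ * Complex.I) • A)⁻¹ * B) i j := by
    rw [intervalIntegral.integral_of_le Real.two_pi_pos.le]
    exact MeasureTheory.integral_congr_ae (MeasureTheory.ae_of_all _ (fun θ => hpt θ))
  have hval : ∀ k, (∫ θ in Set.Ioc (0:ℝ) (2*Real.pi), F k θ)
      = 2*Real.pi * ((starRingEnd ℂ) (c k) * d k) := by
    intro k
    rw [← intervalIntegral.integral_of_le Real.two_pi_pos.le]
    have h1 : (∫ θ in (0:ℝ)..(2*Real.pi), F k θ)
        = (∫ θ in (0:ℝ)..(2*Real.pi), (starRingEnd ℂ) (f (Complex.exp (θ * Complex.I))) *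
            Complex.exp (θ * Complex.I) ^ k) * d k := by
      rw [← intervalIntegral.integral_mul_const]
      apply intervalIntegral.integral_congr
      intro θ _
      simp only [hF]
      ring
    rw [h1, hkey k]
    ring
  have hRentry : HasSum (fun k => (starRingEnd ℂ) (c k) * d k)
      (((∑' k : ℕ, (starRingEnd ℂ) (c k) • A ^ k) * B) i j) := by
    have h2 := hphi i j _ _ hsum1.hasSum
    convert h2 using 2 with k
    simp [hd, Matrix.smul_mul]
  have hfinal := hRentry.mul_left ((2*Real.pi : ℂ))
  have hswap2 : HasSum (fun k => ((2*Real.pi : ℝ):ℂ) * ((starRingEnd ℂ) (c k) * d k))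
      (∫ θ in Set.Ioc (0:ℝ) (2*Real.pi), (∑' k, F k θ)) := by
    convert hswap using 3 with k
    · exact rfl
    rw [hval k]
    push_cast
    ring
  have hEq := hswap2.unique (by convert hfinal using 3 with k; exact rfl; push_cast; ring)
  rw [hIoc] at hEq
  rw [hEq]
  have hπ : ((Real.pi:ℂ)) ≠ 0 := by exact_mod_cast Real.pi_ne_zero
  push_cast
  field_simp
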